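/- For every positive integer n there exist integers aₙ, bₙ, cₙ, dₙ, eₙ such that lcm(1,…,n)⁵ · ∫_{[0,1]⁵} (1-x₁)ⁿ(1-x₂)ⁿ(1-x₃)ⁿ(1-x₄)ⁿ·Pₙ(x₅) / (1 - x₁x₂x₃x₄x₅) dx = aₙ·ζ(2) + bₙ·ζ(3) + cₙ·ζ(4) + dₙ·ζ(5) + eₙ, where Pₙ(x) = (1/n!)·(d/dx)ⁿ(xⁿ(1-x)ⁿ) is the shifted Legendre polynomial. -/

import Mathlib

open MeasureTheory

open Finset Filter Topology

def IsIntR (x : ℝ) : Prop := ∃ z : ℤ, x = (z : ℝ)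

lemma IsIntR.zero : IsIntR 0 := ⟨0, by simp⟩
lemma IsIntR.one : IsIntR 1 := ⟨1, by simp⟩
lemma IsIntR.add {x y : ℝ} (hx : IsIntR x) (hy : IsIntR y) : IsIntR (x + y) := by
  obtain ⟨a, rfl⟩ := hx; obtain ⟨b, rfl⟩ := hy; exact ⟨a + b, by push_cast; ring⟩
lemma IsIntR.neg {x : ℝ} (hx : IsIntR x) : IsIntR (-x) := by
  obtain ⟨a, rfl⟩ := hx; exact ⟨-a, by push_cast; ring⟩
lemma IsIntR.mul {x y : ℝ} (hx : IsIntR x) (hy : IsIntR y) : IsIntR (x * y) := by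
  obtain ⟨a, rfl⟩ := hx; obtain ⟨b, rfl⟩ := hy; exact ⟨a * b, by push_cast; ring⟩
lemma IsIntR.sub {x y : ℝ} (hx : IsIntR x) (hy : IsIntR y) : IsIntR (x - y) := by
  obtain ⟨a, rfl⟩ := hx; obtain ⟨b, rfl⟩ := hy; exact ⟨a - b, by push_cast; ring⟩
lemma IsIntR.sum {α : Type*} (s : Finset α) (f : α → ℝ) (h : ∀ a ∈ s, IsIntR (f a)) :
    IsIntR (∑ a ∈ s, f a) := by
  classical
  induction s using Finset.induction with
  | empty => simpa using IsIntR.zero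
  | insert _ _ hx ih =>
    rw [Finset.sum_insert hx]
    exact (h _ (Finset.mem_insert_self _ _)).add (ih fun a ha => h a (Finset.mem_insert_of_mem ha))
lemma IsIntR.intCast (z : ℤ) : IsIntR (z : ℝ) := ⟨z, rfl⟩
lemma IsIntR.natCast (m : ℕ) : IsIntR (m : ℝ) := ⟨m, by push_cast; ring⟩

lemma isIntR_div_of_dvd {a b : ℤ} (h : b ∣ a) : IsIntR ((a : ℝ) / (b : ℝ)) := by
  rcases eq_or_ne b 0 with rfl | hb
  · obtain ⟨c, rfl⟩ := h; simpa using IsIntR.zero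
  · obtain ⟨c, rfl⟩ := h
    refine ⟨c, ?_⟩
    rw [Int.cast_mul, mul_comm, mul_div_assoc, div_self (by exact_mod_cast hb), mul_one]

/-- Key divisor fact: `L/(m-j)` is an integer. -/
lemma isIntR_L_div_sub {n L j m : ℕ} (hL : ∀ d : ℕ, 1 ≤ d → d ≤ n → d ∣ L)
    (hj : j ∈ Icc 1 (n+1)) (hm : m ∈ Icc 1 (n+1)) (hne : j ≠ m) :
    IsIntR ((L : ℝ) / ((m : ℝ) - (j : ℝ))) := by
  simp only [mem_Icc] at hj hm
  have hd : ((m : ℤ) - (j : ℤ)) ∣ (L : ℤ) := by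
    have h1 : 1 ≤ ((m : ℤ) - (j : ℤ)).natAbs := by omega
    have h2 : ((m : ℤ) - (j : ℤ)).natAbs ≤ n := by omega
    have := hL _ h1 h2
    exact Int.natAbs_dvd.mp (by exact_mod_cast this)
  have := isIntR_div_of_dvd hd
  have hcast : (((m : ℤ) - (j : ℤ) : ℤ) : ℝ) = (m : ℝ) - (j : ℝ) := by push_cast; ring
  rwa [Int.cast_natCast, hcast] at this

lemma sum_point (J T : Finset ℕ) {a b : ℕ} (ha : a ∈ J) (hb : b ∈ T) (v : ℝ) (g : ℕ → ℕ → ℝ) :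
    (∑ j' ∈ J, ∑ t ∈ T, (if j' = a ∧ t = b then v else 0) / g j' t) = v / g a b := by
  classical
  rw [Finset.sum_eq_single a]
  · rw [Finset.sum_eq_single b]
    · simp
    · intro t _ ht; rw [if_neg (by tauto), zero_div]
    · intro h; exact absurd hb h
  · intro b' _ hb'
    exact Finset.sum_eq_zero fun t _ => by rw [if_neg (by tauto), zero_div]
  · intro h; exact absurd ha h

lemma atom (n L : ℕ) (hL : ∀ d : ℕ, 1 ≤ d → d ≤ n → d ∣ L)
    {j m : ℕ} (hj : j ∈ Icc 1 (n+1)) (hm : m ∈ Icc 1 (n+1)) (s : ℕ) (hs : 1 ≤ s) :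
    ∃ c : ℕ → ℕ → ℝ,
      (∀ k : ℕ, (1/((k:ℝ)+j)^s) * (1/((k:ℝ)+m)) =
        ∑ j' ∈ Icc 1 (n+1), ∑ t ∈ Icc 1 (s+1), c j' t / ((k:ℝ)+j')^t) ∧
      (∀ j' t, IsIntR (c j' t * (L:ℝ)^(s+1-t))) ∧
      (∀ j' t, s+1 < t → c j' t = 0) := by
  classical
  have hjpos : ∀ k : ℕ, (0:ℝ) < (k:ℝ) + j := by
    intro k
    have : (1:ℝ) ≤ (j:ℝ) := by exact_mod_cast (mem_Icc.mp hj).1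
    positivity
  have hmpos : ∀ k : ℕ, (0:ℝ) < (k:ℝ) + m := by
    intro k
    have : (1:ℝ) ≤ (m:ℝ) := by exact_mod_cast (mem_Icc.mp hm).1
    positivity
  rcases eq_or_ne j m with rfl | hne
  · -- m = j : single pole of order s+1
    refine ⟨fun j' t => if j' = j ∧ t = s+1 then 1 else 0, ?_, ?_, ?_⟩
    · intro k
      rw [sum_point _ _ hj (mem_Icc.mpr ⟨by omega, le_refl _⟩) 1 (fun j' t => ((k:ℝ)+j')^t)]
      rw [div_mul_div_comm, one_mul, ← pow_succ]
    · intro j' t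
      dsimp only
      by_cases h : j' = j ∧ t = s+1
      · rw [if_pos h]; simpa [h.2] using IsIntR.one
      · rw [if_neg h, zero_mul]; exact IsIntR.zero
    · intro j' t ht; dsimp only; rw [if_neg (fun h => absurd h.2 (by omega))]
  · -- j ≠ m : induction on s
    have hne' : (m : ℝ) - (j : ℝ) ≠ 0 := by
      have : (m : ℝ) ≠ (j : ℝ) := by exact_mod_cast hne.symm
      intro h; apply this; linarith
    induction s, hs using Nat.le_induction with
    | base =>
      set e : ℝ := 1 / ((m:ℝ) - j) with he
      refine ⟨fun j' t => (if j' = j ∧ t = 1 then e else 0) + (if j' = m ∧ t = 1 then -e else 0),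
        ?_, ?_, ?_⟩
      · intro k
        dsimp only
        have h1 : (1:ℕ) ∈ Icc 1 (1+1) := by decide
        simp only [add_div, Finset.sum_add_distrib]
        rw [sum_point _ _ hj h1 e (fun j' t => ((k:ℝ)+j')^t),
            sum_point _ _ hm h1 (-e) (fun j' t => ((k:ℝ)+j')^t)]
        have hk1 : ((k:ℝ)+j) ≠ 0 := ne_of_gt (hjpos k)
        have hk2 : ((k:ℝ)+m) ≠ 0 := ne_of_gt (hmpos k)
        rw [he]
        field_simp
        ring
      · intro j' t
        dsimp only
        by_cases h1 : j' = j ∧ t = 1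
        · rw [if_pos h1, if_neg (by rintro ⟨h, _⟩; exact hne (h1.1 ▸ h ▸ rfl))]
          have : (e + 0) * (L:ℝ)^(1+1-t) = (L:ℝ) / ((m:ℝ) - j) := by
            rw [h1.2]; rw [he]; field_simp; norm_num
          rw [this]
          exact isIntR_L_div_sub hL hj hm hne
        · rw [if_neg h1]
          by_cases h2 : j' = m ∧ t = 1
          · rw [if_pos h2]
            have : (0 + -e) * (L:ℝ)^(1+1-t) = -((L:ℝ) / ((m:ℝ) - j)) := by
              rw [h2.2]; rw [he]; field_simp; norm_num
            rw [this]
            exact (isIntR_L_div_sub hL hj hm hne).neg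
          · rw [if_neg h2]; simpa using IsIntR.zero
      · intro j' t ht
        dsimp only
        rw [if_neg (fun h => absurd h.2 (by omega)), if_neg (fun h => absurd h.2 (by omega)), add_zero]
    | succ s hs1 ih =>
      obtain ⟨c, hid, hint, hsupp⟩ := ih
      set e : ℝ := 1 / ((m:ℝ) - j) with he
      refine ⟨fun j' t => (if j' = j ∧ t = s+1 then e else 0) - e * c j' t, ?_, ?_, ?_⟩
      · intro k
        dsimp only
        have hk1 : ((k:ℝ)+j) ≠ 0 := ne_of_gt (hjpos k)
        have hk2 : ((k:ℝ)+m) ≠ 0 := ne_of_gt (hmpos k)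
        have key : (1/((k:ℝ)+j)^(s+1)) * (1/((k:ℝ)+m)) =
            e / ((k:ℝ)+j)^(s+1) - e * ((1/((k:ℝ)+j)^s) * (1/((k:ℝ)+m))) := by
          rw [he]; field_simp; ring
        rw [key, hid k]
        have hpad : ∀ j' : ℕ, ∑ t ∈ Icc 1 (s+1), c j' t / ((k:ℝ)+j')^t
            = ∑ t ∈ Icc 1 (s+1+1), c j' t / ((k:ℝ)+j')^t := by
          intro j'
          refine Finset.sum_subset (Finset.Icc_subset_Icc_right (by omega)) ?_
          intro t _ ht2
          have : s+1 < t := by simp [mem_Icc] at *; omega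
          rw [hsupp j' t this, zero_div]
        have expand : ∀ j' t : ℕ, ((if j' = j ∧ t = s+1 then e else 0) - e * c j' t) / ((k:ℝ)+j')^t
            = (if j' = j ∧ t = s+1 then e else 0)/((k:ℝ)+j')^t - e * (c j' t/((k:ℝ)+j')^t) := by
          intro j' t; rw [sub_div, mul_div_assoc]
        simp only [expand, Finset.sum_sub_distrib, ← Finset.mul_sum]
        rw [sum_point _ _ hj (mem_Icc.mpr ⟨(by omega : 1 ≤ s+1), by omega⟩) e (fun j' t => ((k:ℝ)+j')^t)]
        congr 2
        exact Finset.sum_congr rfl fun j' _ => hpad j'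
      · intro j' t
        dsimp only
        have hLd : IsIntR ((L:ℝ) / ((m:ℝ) - j)) := isIntR_L_div_sub hL hj hm hne
        by_cases h2 : s+1+1 < t
        · rw [if_neg (fun h => absurd h.2 (by omega)), hsupp j' t (by omega)]
          simpa using IsIntR.zero
        · -- t ≤ s+2
          by_cases h1 : j' = j ∧ t = s+1
          · rw [if_pos h1, h1.2]
            have heq : (e - e * c j (s+1)) * (L:ℝ)^(s+1+1-(s+1)) =
                (L:ℝ)/((m:ℝ)-j) - ((L:ℝ)/((m:ℝ)-j)) * (c j (s+1) * (L:ℝ)^(s+1-(s+1))) := by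
              rw [show s+1+1-(s+1) = 1 by omega]
              simp only [Nat.add_sub_cancel, Nat.sub_self, pow_one, pow_zero, mul_one, he]
              field_simp
            rw [h1.1, heq]
            exact hLd.sub (hLd.mul (hint j (s+1)))
          · rw [if_neg h1, zero_sub, neg_mul]
            by_cases h3 : t ≤ s+1
            · have heq : e * c j' t * (L:ℝ)^(s+1+1-t) =
                  ((L:ℝ)/((m:ℝ)-j)) * (c j' t * (L:ℝ)^(s+1-t)) := by
                have : s+1+1-t = (s+1-t)+1 := by omega
                rw [this, pow_succ, he]; field_simp
              rw [heq]
              exact (hLd.mul (hint j' t)).neg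
            · have ht' : t = s+1+1 := by omega
              rw [hsupp j' t (by omega)]
              simpa using IsIntR.zero.neg
      · intro j' t ht
        dsimp only
        rw [if_neg (fun h => absurd h.2 (by omega)), hsupp j' t (by omega)]
        simp

def PF (n L r : ℕ) (f : ℕ → ℝ) : Prop :=
  ∃ c : ℕ → ℕ → ℝ,
    (∀ k : ℕ, f k = ∑ j ∈ Icc 1 (n+1), ∑ s ∈ Icc 1 r, c j s / ((k:ℝ)+j)^s) ∧
    (∀ j s, IsIntR (c j s * (L:ℝ)^(r-s))) ∧
    (∀ j s, r < s → c j s = 0)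

lemma PF_base (n L : ℕ) {m : ℕ} (hm : m ∈ Icc 1 (n+1)) :
    PF n L 1 (fun k => 1/((k:ℝ)+m)) := by
  classical
  refine ⟨fun j' t => if j' = m ∧ t = 1 then 1 else 0, ?_, ?_, ?_⟩
  · intro k
    rw [sum_point _ _ hm (mem_Icc.mpr ⟨le_refl _, le_refl _⟩) 1 (fun j' t => ((k:ℝ)+j')^t)]
    simp
  · intro j t
    dsimp only
    by_cases h : j = m ∧ t = 1
    · rw [if_pos h, h.2]
      have : ((L:ℝ))^(1-1) = ((L^(1-1) : ℕ) : ℝ) := by push_cast; ring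
      rw [this]
      exact IsIntR.one.mul (IsIntR.natCast (L^(1-1)))
    · rw [if_neg h, zero_mul]; exact IsIntR.zero
  · intro j t ht; dsimp only; rw [if_neg (fun h => absurd h.2 (by omega))]

lemma PF_mul (n L : ℕ) (hL : ∀ d : ℕ, 1 ≤ d → d ≤ n → d ∣ L)
    {r : ℕ} (hr : 1 ≤ r) {f : ℕ → ℝ} (hf : PF n L r f) {m : ℕ} (hm : m ∈ Icc 1 (n+1)) :
    PF n L (r+1) (fun k => f k * (1/((k:ℝ)+m))) := by
  classical
  obtain ⟨c, hid, hint, hsupp⟩ := hf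
  set J := Icc 1 (n+1) with hJ
  -- choose atom coefficients
  let A : ℕ → ℕ → ℕ → ℕ → ℝ := fun j s =>
    if h : j ∈ J ∧ 1 ≤ s then Classical.choose (atom n L hL h.1 hm s h.2) else fun _ _ => 0
  have Aspec : ∀ j s (hj : j ∈ J) (hs : 1 ≤ s),
      (∀ k : ℕ, (1/((k:ℝ)+j)^s) * (1/((k:ℝ)+m)) =
        ∑ j' ∈ J, ∑ t ∈ Icc 1 (s+1), A j s j' t / ((k:ℝ)+j')^t) ∧
      (∀ j' t, IsIntR (A j s j' t * (L:ℝ)^(s+1-t))) ∧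
      (∀ j' t, s+1 < t → A j s j' t = 0) := by
    intro j s hj hs
    have h : j ∈ J ∧ 1 ≤ s := ⟨hj, hs⟩
    simp only [A, dif_pos h]
    exact Classical.choose_spec (atom n L hL h.1 hm s h.2)
  refine ⟨fun j' t => ∑ j ∈ J, ∑ s ∈ Icc 1 r, c j s * A j s j' t, ?_, ?_, ?_⟩
  · intro k
    dsimp only
    have step1 : f k * (1/((k:ℝ)+m))
        = ∑ j ∈ J, ∑ s ∈ Icc 1 r, c j s * ((1/((k:ℝ)+j)^s) * (1/((k:ℝ)+m))) := by
      rw [hid k, Finset.sum_mul]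
      refine Finset.sum_congr rfl fun j _ => ?_
      rw [Finset.sum_mul]
      exact Finset.sum_congr rfl fun s _ => by ring
    rw [step1]
    have step2 : ∀ j ∈ J, ∀ s ∈ Icc 1 r,
        c j s * ((1/((k:ℝ)+j)^s) * (1/((k:ℝ)+m)))
        = ∑ j' ∈ J, ∑ t ∈ Icc 1 (r+1), c j s * A j s j' t / ((k:ℝ)+j')^t := by
      intro j hj s hs
      have hs1 : 1 ≤ s := (mem_Icc.mp hs).1
      have hsr : s ≤ r := (mem_Icc.mp hs).2
      rw [(Aspec j s hj hs1).1 k, Finset.mul_sum]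
      refine Finset.sum_congr rfl fun j' _ => ?_
      rw [Finset.mul_sum]
      rw [Finset.sum_subset (Finset.Icc_subset_Icc_right (by omega : s+1 ≤ r+1))
        (fun t _ ht2 => ?_)]
      · exact Finset.sum_congr rfl fun t _ => by ring
      · have : s+1 < t := by simp only [mem_Icc] at *; omega
        rw [(Aspec j s hj hs1).2.2 j' t this]
        simp
    rw [Finset.sum_congr rfl (fun j hj => Finset.sum_congr rfl (step2 j hj))]
    -- now swap the four sums
    have swap : ∀ (X : ℕ → ℕ → ℕ → ℕ → ℝ),
        (∑ j ∈ J, ∑ s ∈ Icc 1 r, ∑ j' ∈ J, ∑ t ∈ Icc 1 (r+1), X j s j' t)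
        = ∑ j' ∈ J, ∑ t ∈ Icc 1 (r+1), ∑ j ∈ J, ∑ s ∈ Icc 1 r, X j s j' t := by
      intro X
      calc ∑ j ∈ J, ∑ s ∈ Icc 1 r, ∑ j' ∈ J, ∑ t ∈ Icc 1 (r+1), X j s j' t
          = ∑ j ∈ J, ∑ j' ∈ J, ∑ s ∈ Icc 1 r, ∑ t ∈ Icc 1 (r+1), X j s j' t :=
            Finset.sum_congr rfl fun j _ => Finset.sum_comm
        _ = ∑ j' ∈ J, ∑ j ∈ J, ∑ s ∈ Icc 1 r, ∑ t ∈ Icc 1 (r+1), X j s j' t :=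
            Finset.sum_comm
        _ = ∑ j' ∈ J, ∑ j ∈ J, ∑ t ∈ Icc 1 (r+1), ∑ s ∈ Icc 1 r, X j s j' t :=
            Finset.sum_congr rfl fun j' _ => Finset.sum_congr rfl fun j _ => Finset.sum_comm
        _ = ∑ j' ∈ J, ∑ t ∈ Icc 1 (r+1), ∑ j ∈ J, ∑ s ∈ Icc 1 r, X j s j' t :=
            Finset.sum_congr rfl fun j' _ => Finset.sum_comm
    rw [swap]
    refine Finset.sum_congr rfl fun j' _ => Finset.sum_congr rfl fun t _ => ?_
    rw [Finset.sum_div]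
    exact Finset.sum_congr rfl fun j _ => (Finset.sum_div _ _ _).symm
  · -- integrality
    intro j' t
    dsimp only
    rw [Finset.sum_mul]
    refine IsIntR.sum _ _ fun j hj => ?_
    rw [Finset.sum_mul]
    refine IsIntR.sum _ _ fun s hs => ?_
    have hs1 : 1 ≤ s := (mem_Icc.mp hs).1
    have hsr : s ≤ r := (mem_Icc.mp hs).2
    by_cases ht : t ≤ s+1
    · have hexp : (L:ℝ)^(r+1-t) = (L:ℝ)^(r-s) * (L:ℝ)^(s+1-t) := by
        rw [← pow_add]
        congr 1
        omega
      have : c j s * A j s j' t * (L:ℝ)^(r+1-t)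
          = (c j s * (L:ℝ)^(r-s)) * (A j s j' t * (L:ℝ)^(s+1-t)) := by
        rw [hexp]; ring
      rw [this]
      exact (hint j s).mul ((Aspec j s hj hs1).2.1 j' t)
    · rw [(Aspec j s hj hs1).2.2 j' t (by omega)]
      simpa using IsIntR.zero
  · -- support
    intro j' t ht
    dsimp only
    refine Finset.sum_eq_zero fun j hj => Finset.sum_eq_zero fun s hs => ?_
    rw [(Aspec j s hj (mem_Icc.mp hs).1).2.2 j' t (by
      have := (mem_Icc.mp hs).2; omega), mul_zero]

lemma PF_prod5 (n L : ℕ) (hL : ∀ d : ℕ, 1 ≤ d → d ≤ n → d ∣ L)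
    (m : Fin 5 → ℕ) (hm : ∀ i, m i ∈ Icc 1 (n+1)) :
    PF n L 5 (fun k => ∏ i, 1/((k:ℝ) + m i)) := by
  have h1 : PF n L 1 (fun k => 1/((k:ℝ)+ m 0)) := PF_base n L (hm 0)
  have h2 := PF_mul n L hL (by norm_num) h1 (hm 1)
  have h3 := PF_mul n L hL (by norm_num) h2 (hm 2)
  have h4 := PF_mul n L hL (by norm_num) h3 (hm 3)
  have h5 := PF_mul n L hL (by norm_num) h4 (hm 4)
  have : (fun k : ℕ => ∏ i, 1/((k:ℝ) + m i)) = (fun k : ℕ =>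
      ((((1/((k:ℝ)+ m 0)) * (1/((k:ℝ)+ m 1))) * (1/((k:ℝ)+ m 2))) * (1/((k:ℝ)+ m 3))) *
        (1/((k:ℝ)+ m 4))) := by
    funext k
    rw [Fin.prod_univ_five]
  rw [this]
  exact h5

lemma IsIntR.pow {x : ℝ} (hx : IsIntR x) (s : ℕ) : IsIntR (x ^ s) := by
  induction s with
  | zero => simpa using IsIntR.one
  | succ s ih => rw [pow_succ]; exact ih.mul hx

lemma summable_shift {j : ℕ} (hj : 1 ≤ j) {s : ℕ} (hs : 2 ≤ s) :
    Summable (fun k : ℕ => 1/((k:ℝ)+j)^s) := by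
  have base : Summable (fun k : ℕ => 1/((k:ℝ)+1)^2) := by
    have h := (Real.summable_one_div_nat_pow (p := 2)).mpr (by norm_num)
    have h2 := (summable_nat_add_iff (f := fun n : ℕ => 1 / (n:ℝ)^2) 1).mpr h
    refine h2.congr fun k => ?_
    push_cast
    ring_nf
  refine Summable.of_nonneg_of_le (fun k => by positivity) (fun k => ?_) base
  have h1 : (0:ℝ) < (k:ℝ)+1 := by positivity
  have h2 : ((k:ℝ)+1)^2 ≤ ((k:ℝ)+j)^s := by
    have hkj : (k:ℝ)+1 ≤ (k:ℝ)+j := by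
      have : (1:ℝ) ≤ (j:ℝ) := by exact_mod_cast hj
      linarith
    calc ((k:ℝ)+1)^2 ≤ ((k:ℝ)+j)^2 := by
          exact pow_le_pow_left₀ (by positivity) hkj 2
      _ ≤ ((k:ℝ)+j)^s := by
          refine pow_le_pow_right₀ ?_ hs
          linarith
  exact one_div_le_one_div_of_le (by positivity) h2

lemma tsum_shift {j : ℕ} (hj : 1 ≤ j) {s : ℕ} (hs : 2 ≤ s) :
    (∑' k : ℕ, 1/((k:ℝ)+j)^s)
      = (∑' k : ℕ, 1/((k:ℝ)+1)^s) - ∑ i ∈ range (j-1), 1/((i:ℝ)+1)^s := by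
  have hsummable : Summable (fun k : ℕ => 1/((k:ℝ)+1)^s) := by
    have h0 := summable_shift (j := 1) (le_refl 1) hs
    exact h0.congr fun k => by norm_num
  have h := Summable.sum_add_tsum_nat_add (f := fun k : ℕ => 1/((k:ℝ)+1)^s) (j-1) hsummable
  have heq : ∀ k : ℕ, 1/(((k + (j-1) : ℕ):ℝ)+1)^s = 1/((k:ℝ)+j)^s := by
    intro k
    congr 2
    have : ((j-1:ℕ):ℝ) = (j:ℝ) - 1 := by
      rw [Nat.cast_sub hj]; norm_num
    push_cast [this]
    ring
  rw [show (fun k : ℕ => 1/((k:ℝ)+j)^s) = (fun k : ℕ => 1/(((k + (j-1) : ℕ):ℝ)+1)^s)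
    from funext fun k => (heq k).symm]
  linarith [h]

noncomputable def Hh (M : ℕ) : ℝ := ∑ i ∈ range M, 1/((i:ℝ)+1)
noncomputable def Ph (j s : ℕ) : ℝ := ∑ i ∈ range (j-1), 1/((i:ℝ)+1)^s
noncomputable def Ts (K j s : ℕ) : ℝ := ∑ k ∈ range K, 1/((k:ℝ)+j)^s

lemma Hh_add (a b : ℕ) : Hh (a+b) = Hh a + ∑ i ∈ range b, 1/(((a+i:ℕ):ℝ)+1) := by
  induction b with
  | zero => simp [Hh]
  | succ b ih =>
    rw [← Nat.add_assoc, Hh, Finset.sum_range_succ, ← Hh, ih, Finset.sum_range_succ]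
    push_cast
    ring

lemma Ts_eq (j : ℕ) (hj : 1 ≤ j) (K : ℕ) : Ts K j 1 = Hh (K+(j-1)) - Hh (j-1) := by
  induction K with
  | zero => simp [Ts]
  | succ K ih =>
    have h1 : K + 1 + (j-1) = (K + (j-1)) + 1 := by omega
    have e1 : Hh (K + 1 + (j-1)) = Hh (K + (j-1)) + 1/(((K + (j-1) : ℕ):ℝ)+1) := by
      rw [h1, Hh, Finset.sum_range_succ, ← Hh]
    have h2 : ((K + (j-1) : ℕ):ℝ) + 1 = (K:ℝ) + j := by
      have : ((j-1:ℕ):ℝ) = (j:ℝ) - 1 := by rw [Nat.cast_sub hj]; norm_num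
      push_cast [this]
      ring
    rw [Ts, Finset.sum_range_succ, ← Ts, ih, e1, h2]
    ring

lemma Hh_diff_tendsto (j : ℕ) (hj : 1 ≤ j) :
    Filter.Tendsto (fun K => Hh (K+(j-1)) - Hh K) atTop (𝓝 0) := by
  have heq : ∀ K, Hh (K+(j-1)) - Hh K = ∑ i ∈ range (j-1), 1/(((K+i:ℕ):ℝ)+1) := by
    intro K
    rw [Hh_add]
    ring
  have hb : ∀ K : ℕ, |∑ i ∈ range (j-1), 1/(((K+i:ℕ):ℝ)+1)| ≤ ((j:ℝ)-1) * (1/((K:ℝ)+1)) := by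
    intro K
    have h1 : ∀ i ∈ range (j-1), (0:ℝ) ≤ 1/(((K+i:ℕ):ℝ)+1) := fun i _ => by positivity
    rw [abs_of_nonneg (Finset.sum_nonneg h1)]
    calc ∑ i ∈ range (j-1), 1/(((K+i:ℕ):ℝ)+1)
        ≤ ∑ _i ∈ range (j-1), 1/((K:ℝ)+1) := by
          refine Finset.sum_le_sum fun i _ => ?_
          refine one_div_le_one_div_of_le (by positivity) ?_
          push_cast
          linarith [Nat.cast_nonneg (α := ℝ) i]
      _ = ((j-1:ℕ):ℝ) * (1/((K:ℝ)+1)) := by rw [Finset.sum_const, card_range]; ring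
      _ ≤ ((j:ℝ)-1) * (1/((K:ℝ)+1)) := by
          have : ((j-1:ℕ):ℝ) = (j:ℝ)-1 := by rw [Nat.cast_sub hj]; norm_num
          rw [this]
  have hzero : Filter.Tendsto (fun K : ℕ => ((j:ℝ)-1) * (1/((K:ℝ)+1))) atTop (𝓝 0) := by
    have := tendsto_one_div_add_atTop_nhds_zero_nat.const_mul ((j:ℝ)-1)
    simpa using this
  have := squeeze_zero_norm (f := fun K : ℕ => ∑ i ∈ range (j-1), 1/(((K+i:ℕ):ℝ)+1)) (fun K => hb K) hzero
  exact Filter.Tendsto.congr (fun K => (heq K).symm) this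

lemma harmonic_atTop : Filter.Tendsto Hh atTop atTop := by
  have h := Real.tendsto_sum_range_one_div_nat_succ_atTop
  refine h.congr fun n => ?_
  refine Finset.sum_congr rfl fun i _ => ?_
  norm_num

lemma tsum_PF5 (n L : ℕ) (hL : ∀ d : ℕ, 1 ≤ d → d ≤ n → d ∣ L)
    (m : Fin 5 → ℕ) (hm : ∀ i, m i ∈ Icc 1 (n+1)) :
    ∃ A : ℕ → ℝ, (∀ s, IsIntR (A s)) ∧
      (L:ℝ)^5 * (∑' k : ℕ, ∏ i, 1/((k:ℝ) + m i)) =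
        A 2 * (∑' k : ℕ, 1/((k:ℝ)+1)^2) + A 3 * (∑' k : ℕ, 1/((k:ℝ)+1)^3) +
        A 4 * (∑' k : ℕ, 1/((k:ℝ)+1)^4) + A 5 * (∑' k : ℕ, 1/((k:ℝ)+1)^5) + A 0 := by
  classical
  obtain ⟨c, hid, hint, hsupp⟩ := PF_prod5 n L hL m hm
  set J : Finset ℕ := Icc 1 (n+1) with hJdef
  set f : ℕ → ℝ := fun k => ∏ i, 1/((k:ℝ) + m i) with hfdef
  have hm1 : ∀ i, 1 ≤ m i := fun i => (mem_Icc.mp (hm i)).1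
  have base2 : Summable (fun k : ℕ => 1/((k:ℝ)+1)^2) := by
    have h0 := summable_shift (j := 1) (le_refl 1) (le_refl 2)
    exact h0.congr fun k => by norm_num
  -- summability of f
  have hfnonneg : ∀ k, 0 ≤ f k := by
    intro k
    refine Finset.prod_nonneg fun i _ => by positivity
  have hfle : ∀ k, f k ≤ 1/((k:ℝ)+1)^2 := by
    intro k
    have h5 : f k ≤ (1/((k:ℝ)+1))^5 := by
      have := Finset.prod_le_prod (s := Finset.univ)
        (f := fun i : Fin 5 => 1/((k:ℝ)+ m i)) (g := fun _ : Fin 5 => 1/((k:ℝ)+1))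
        (fun i _ => by positivity)
        (fun i _ => by
          refine one_div_le_one_div_of_le (by positivity) ?_
          have : (1:ℝ) ≤ (m i : ℝ) := by exact_mod_cast hm1 i
          linarith)
      rw [hfdef]
      simp only [one_div] at this ⊢
      simpa [Finset.prod_const, Finset.card_univ] using this
    have h6 : ((1:ℝ)/((k:ℝ)+1))^5 ≤ (1/((k:ℝ)+1))^2 := by
      refine pow_le_pow_of_le_one (by positivity) ?_ (by norm_num)
      rw [div_le_one (by positivity)]
      linarith [Nat.cast_nonneg (α := ℝ) k]
    calc f k ≤ (1/((k:ℝ)+1))^5 := h5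
      _ ≤ (1/((k:ℝ)+1))^2 := h6
      _ = 1/((k:ℝ)+1)^2 := by rw [div_pow, one_pow]
  have hfsummable : Summable f := Summable.of_nonneg_of_le hfnonneg hfle base2
  -- partial sums identity
  have hSK : ∀ K, ∑ k ∈ range K, f k =
      ∑ j ∈ J, c j 1 * Ts K j 1 + ∑ j ∈ J, ∑ s ∈ Icc 2 5, c j s * Ts K j s := by
    intro K
    have h1 : ∑ k ∈ range K, f k = ∑ j ∈ J, ∑ s ∈ Icc 1 5, c j s * Ts K j s := by
      calc ∑ k ∈ range K, f k
          = ∑ k ∈ range K, ∑ j ∈ J, ∑ s ∈ Icc 1 5, c j s / ((k:ℝ)+j)^s :=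
            Finset.sum_congr rfl fun k _ => hid k
        _ = ∑ j ∈ J, ∑ k ∈ range K, ∑ s ∈ Icc 1 5, c j s / ((k:ℝ)+j)^s := Finset.sum_comm
        _ = ∑ j ∈ J, ∑ s ∈ Icc 1 5, ∑ k ∈ range K, c j s / ((k:ℝ)+j)^s :=
            Finset.sum_congr rfl fun j _ => Finset.sum_comm
        _ = ∑ j ∈ J, ∑ s ∈ Icc 1 5, c j s * Ts K j s := by
            refine Finset.sum_congr rfl fun j _ => Finset.sum_congr rfl fun s _ => ?_
            rw [Ts, Finset.mul_sum]
            exact Finset.sum_congr rfl fun k _ => by rw [div_eq_mul_one_div]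
    rw [h1]
    have h2 : Icc 1 5 = insert 1 (Icc 2 5) := by decide
    rw [Finset.sum_congr rfl fun j (_ : j ∈ J) => by
      rw [h2, Finset.sum_insert (by decide)]]
    rw [Finset.sum_add_distrib]
  -- limits for s ≥ 2
  have hT2 : ∀ j ∈ J, ∀ s ∈ Icc 2 5, Filter.Tendsto (fun K => Ts K j s) atTop
      (𝓝 ((∑' k : ℕ, 1/((k:ℝ)+1)^s) - Ph j s)) := by
    intro j hj s hs
    have hj1 : 1 ≤ j := (mem_Icc.mp hj).1
    have hs2 : 2 ≤ s := (mem_Icc.mp hs).1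
    have hsm := summable_shift hj1 hs2
    have := hsm.hasSum.tendsto_sum_nat
    rw [tsum_shift hj1 hs2] at this
    exact this
  have hS := hfsummable.hasSum.tendsto_sum_nat
  have hW : Filter.Tendsto (fun K => ∑ j ∈ J, ∑ s ∈ Icc 2 5, c j s * Ts K j s) atTop
      (𝓝 (∑ j ∈ J, ∑ s ∈ Icc 2 5, c j s * ((∑' k : ℕ, 1/((k:ℝ)+1)^s) - Ph j s))) := by
    refine tendsto_finset_sum _ fun j hj => tendsto_finset_sum _ fun s hs => ?_
    exact ((hT2 j hj s hs).const_mul _)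
  set W : ℝ := ∑ j ∈ J, ∑ s ∈ Icc 2 5, c j s * ((∑' k : ℕ, 1/((k:ℝ)+1)^s) - Ph j s) with hWdef
  have hU : Filter.Tendsto (fun K => ∑ j ∈ J, c j 1 * Ts K j 1) atTop
      (𝓝 ((∑' k, f k) - W)) := by
    have := hS.sub hW
    refine Filter.Tendsto.congr (fun K => ?_) this
    rw [hSK K]
    ring
  -- decompose the s = 1 part
  set u : ℝ := ∑ j ∈ J, c j 1 with hudef
  have hsplit : ∀ K, ∑ j ∈ J, c j 1 * Ts K j 1 =
      u * Hh K + ∑ j ∈ J, c j 1 * (Hh (K+(j-1)) - Hh K) - ∑ j ∈ J, c j 1 * Hh (j-1) := by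
    intro K
    have : ∀ j ∈ J, c j 1 * Ts K j 1 =
        c j 1 * Hh K + c j 1 * (Hh (K+(j-1)) - Hh K) - c j 1 * Hh (j-1) := by
      intro j hj
      rw [Ts_eq j (mem_Icc.mp hj).1 K]
      ring
    rw [Finset.sum_congr rfl this]
    rw [Finset.sum_sub_distrib, Finset.sum_add_distrib, ← Finset.sum_mul, ← hudef, mul_comm]
  have hD : Filter.Tendsto (fun K => ∑ j ∈ J, c j 1 * (Hh (K+(j-1)) - Hh K)) atTop (𝓝 0) := by
    have := tendsto_finset_sum J (fun j (hj : j ∈ J) =>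
      (Hh_diff_tendsto j (mem_Icc.mp hj).1).const_mul (c j 1))
    simpa using this
  have hUH : Filter.Tendsto (fun K => u * Hh K) atTop
      (𝓝 (((∑' k, f k) - W) - 0 + ∑ j ∈ J, c j 1 * Hh (j-1))) := by
    have h1 := (hU.sub hD).add (tendsto_const_nhds (x := ∑ j ∈ J, c j 1 * Hh (j-1)))
    refine Filter.Tendsto.congr (fun K => ?_) h1
    rw [hsplit K]
    ring
  have hu0 : u = 0 := by
    by_contra hu
    have hHh : Filter.Tendsto Hh atTop
        (𝓝 ((((∑' k, f k) - W) - 0 + ∑ j ∈ J, c j 1 * Hh (j-1)) / u)) := by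
      have := hUH.div_const u
      refine Filter.Tendsto.congr (fun K => ?_) this
      field_simp
    exact not_tendsto_nhds_of_tendsto_atTop harmonic_atTop _ hHh
  have hval : (∑' k, f k) = W - ∑ j ∈ J, c j 1 * Hh (j-1) := by
    have h0 : Filter.Tendsto (fun _ : ℕ => (0:ℝ)) atTop
        (𝓝 (((∑' k, f k) - W) - 0 + ∑ j ∈ J, c j 1 * Hh (j-1))) := by
      refine Filter.Tendsto.congr (fun K => ?_) hUH
      rw [hu0, zero_mul]
    have := tendsto_nhds_unique h0 tendsto_const_nhds
    linarith [this]
  -- final assembly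
  have hLpow : ∀ s : ℕ, IsIntR ((L:ℝ)^s) := fun s => by
    have h : ((L:ℝ))^s = ((L^s : ℕ) : ℝ) := by push_cast; ring
    rw [h]; exact IsIntR.natCast _
  have hPh : ∀ j ∈ J, ∀ s : ℕ, IsIntR ((L:ℝ)^s * Ph j s) := by
    intro j hj s
    rw [Ph, Finset.mul_sum]
    refine IsIntR.sum _ _ fun i hi => ?_
    have hi1 : i + 1 ≤ n := by
      have h1 := (mem_Icc.mp hj).2
      have h2 := Finset.mem_range.mp hi
      omega
    have hdvd : (((i:ℤ)+1)) ∣ (L:ℤ) := by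
      have := hL (i+1) (by omega) hi1
      exact_mod_cast this
    have h3 : (L:ℝ)^s * (1/((i:ℝ)+1)^s) = ((L:ℝ)/((i:ℝ)+1))^s := by
      rw [div_pow]; ring
    rw [h3]
    have h4 := isIntR_div_of_dvd hdvd
    have h5 : ((L:ℤ):ℝ)/((((i:ℤ)+1):ℤ):ℝ) = (L:ℝ)/((i:ℝ)+1) := by push_cast; ring
    rw [h5] at h4
    exact h4.pow s
  have hHhPh : ∀ j : ℕ, Hh (j-1) = Ph j 1 := by
    intro j
    rw [Hh, Ph]
    exact Finset.sum_congr rfl fun i _ => by rw [pow_one]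
  have hc5 : ∀ j s : ℕ, IsIntR ((L:ℝ)^5 * c j s) := by
    intro j s
    by_cases h : s ≤ 5
    · have heq : (L:ℝ)^5 * c j s = (c j s * (L:ℝ)^(5-s)) * (L:ℝ)^s := by
        have h5 : (5-s)+s = 5 := by omega
        rw [mul_assoc, ← pow_add, h5, mul_comm]
      rw [heq]
      exact (hint j s).mul (hLpow s)
    · rw [hsupp j s (by omega), mul_zero]; exact IsIntR.zero
  have hicc : ∀ g : ℕ → ℝ, ∑ t ∈ Icc 2 5, g t = g 2 + g 3 + g 4 + g 5 := by
    intro g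
    rw [show Icc (2:ℕ) 5 = {2,3,4,5} by decide]
    rw [Finset.sum_insert (by decide), Finset.sum_insert (by decide),
      Finset.sum_insert (by decide), Finset.sum_singleton]
    ring
  have key : ∀ j ∈ J, (∑ t ∈ Icc 2 5, c j t * ((∑' k : ℕ, 1/((k:ℝ)+1)^t) - Ph j t))
      = c j 2 * (∑' k : ℕ, 1/((k:ℝ)+1)^2) + c j 3 * (∑' k : ℕ, 1/((k:ℝ)+1)^3)
        + c j 4 * (∑' k : ℕ, 1/((k:ℝ)+1)^4) + c j 5 * (∑' k : ℕ, 1/((k:ℝ)+1)^5)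
        - (c j 2 * Ph j 2 + c j 3 * Ph j 3 + c j 4 * Ph j 4 + c j 5 * Ph j 5) := by
    intro j _
    rw [hicc (fun t => c j t * ((∑' k : ℕ, 1/((k:ℝ)+1)^t) - Ph j t))]
    ring
  have hsum_split : W = (∑ j ∈ J, c j 2) * (∑' k : ℕ, 1/((k:ℝ)+1)^2)
      + (∑ j ∈ J, c j 3) * (∑' k : ℕ, 1/((k:ℝ)+1)^3)
      + (∑ j ∈ J, c j 4) * (∑' k : ℕ, 1/((k:ℝ)+1)^4)
      + (∑ j ∈ J, c j 5) * (∑' k : ℕ, 1/((k:ℝ)+1)^5)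
      - ∑ j ∈ J, (c j 2 * Ph j 2 + c j 3 * Ph j 3 + c j 4 * Ph j 4 + c j 5 * Ph j 5) := by
    rw [hWdef, Finset.sum_congr rfl key]
    rw [Finset.sum_sub_distrib, Finset.sum_add_distrib, Finset.sum_add_distrib,
      Finset.sum_add_distrib, ← Finset.sum_mul, ← Finset.sum_mul, ← Finset.sum_mul,
      ← Finset.sum_mul]
  set A : ℕ → ℝ := fun s => if s = 0 then
      -((L:ℝ)^5 * ∑ j ∈ J, (c j 2 * Ph j 2 + c j 3 * Ph j 3 + c j 4 * Ph j 4 + c j 5 * Ph j 5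
        + c j 1 * Hh (j-1)))
    else (L:ℝ)^5 * ∑ j ∈ J, c j s with hAdef
  have hA0 : A 0 = -((L:ℝ)^5 * ∑ j ∈ J, (c j 2 * Ph j 2 + c j 3 * Ph j 3 + c j 4 * Ph j 4
      + c j 5 * Ph j 5 + c j 1 * Hh (j-1))) := by
    rw [hAdef]
    rfl
  have hAs : ∀ s : ℕ, s ≠ 0 → A s = (L:ℝ)^5 * ∑ j ∈ J, c j s := by
    intro s hs
    rw [hAdef]
    dsimp only
    rw [if_neg hs]
  refine ⟨A, ?_, ?_⟩
  · intro s
    by_cases h0 : s = 0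
    · rw [h0, hA0]
      refine IsIntR.neg ?_
      rw [Finset.mul_sum]
      refine IsIntR.sum _ _ fun j hj => ?_
      have e : (L:ℝ)^5 * (c j 2 * Ph j 2 + c j 3 * Ph j 3 + c j 4 * Ph j 4 + c j 5 * Ph j 5
          + c j 1 * Hh (j-1))
        = (c j 2 * (L:ℝ)^(5-2)) * ((L:ℝ)^2 * Ph j 2)
          + (c j 3 * (L:ℝ)^(5-3)) * ((L:ℝ)^3 * Ph j 3)
          + (c j 4 * (L:ℝ)^(5-4)) * ((L:ℝ)^4 * Ph j 4)
          + (c j 5 * (L:ℝ)^(5-5)) * ((L:ℝ)^5 * Ph j 5)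
          + (c j 1 * (L:ℝ)^(5-1)) * ((L:ℝ)^1 * Hh (j-1)) := by
        show (L:ℝ)^5 * _ = (c j 2 * (L:ℝ)^3) * ((L:ℝ)^2 * Ph j 2)
          + (c j 3 * (L:ℝ)^2) * ((L:ℝ)^3 * Ph j 3)
          + (c j 4 * (L:ℝ)^1) * ((L:ℝ)^4 * Ph j 4)
          + (c j 5 * (L:ℝ)^0) * ((L:ℝ)^5 * Ph j 5)
          + (c j 1 * (L:ℝ)^4) * ((L:ℝ)^1 * Hh (j-1))
        ring
      rw [e]
      refine ((((((hint j 2).mul (hPh j hj 2)).add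
        ((hint j 3).mul (hPh j hj 3))).add
        ((hint j 4).mul (hPh j hj 4))).add
        ((hint j 5).mul (hPh j hj 5))).add
        ((hint j 1).mul ?_))
      rw [hHhPh j]
      exact hPh j hj 1
    · rw [hAs s h0, Finset.mul_sum]
      exact IsIntR.sum _ _ fun j _ => hc5 j s
  · rw [hAs 2 (by norm_num), hAs 3 (by norm_num), hAs 4 (by norm_num), hAs 5 (by norm_num), hA0,
      hval, hsum_split]
    simp only [Finset.sum_add_distrib]
    ring

lemma iteratedDeriv_polyEval (p : Polynomial ℝ) (k : ℕ) :
    iteratedDeriv k (fun t : ℝ => p.eval t) = fun t => (Polynomial.derivative^[k] p).eval t := by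
  induction k with
  | zero => simp
  | succ k ih =>
    rw [iteratedDeriv_succ, ih]
    funext t
    rw [Function.iterate_succ_apply']
    exact Polynomial.deriv _

lemma one_sub_pow_expand (n : ℕ) (t : ℝ) :
    (1 - t)^n = ∑ i ∈ range (n+1), (-1:ℝ)^i * (n.choose i) * t^i := by
  have h := add_pow (-t) 1 n
  have h2 : (1 - t) = (-t) + 1 := by ring
  rw [h2, h]
  refine Finset.sum_congr rfl fun i _ => ?_
  rw [neg_pow]
  ring

lemma legendre_formula (n : ℕ) (P : ℝ → ℝ)
    (hP : ∀ y : ℝ, P y = (1 / (n.factorial : ℝ)) *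
      iteratedDeriv n (fun t : ℝ => t ^ n * (1 - t) ^ n) y) :
    ∀ y : ℝ, P y = ∑ i ∈ range (n+1),
      ((-1:ℝ)^i * (n.choose i) * ((n+i).choose n)) * y^i := by
  intro y
  set q : Polynomial ℝ :=
    ∑ i ∈ range (n+1), ((-1:ℝ)^i * (n.choose i)) • (Polynomial.X ^ (n+i)) with hqdef
  have h1 : (fun t : ℝ => t ^ n * (1 - t) ^ n) = fun t => q.eval t := by
    funext t
    rw [hqdef, Polynomial.eval_finset_sum]
    simp only [Polynomial.eval_smul, Polynomial.eval_pow, Polynomial.eval_X, smul_eq_mul]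
    rw [one_sub_pow_expand n t, Finset.mul_sum]
    refine Finset.sum_congr rfl fun i _ => ?_
    rw [pow_add]
    ring
  have h2 : Polynomial.derivative^[n] q
      = ∑ i ∈ range (n+1), ((-1:ℝ)^i * (n.choose i)) • ((((n+i).descFactorial n : ℝ)) • Polynomial.X ^ (n+i-n)) := by
    rw [hqdef, Polynomial.iterate_derivative_sum]
    refine Finset.sum_congr rfl fun i _ => ?_
    rw [Polynomial.iterate_derivative_smul, Polynomial.iterate_derivative_X_pow_eq_smul]
  have h3 : iteratedDeriv n (fun t : ℝ => t ^ n * (1 - t) ^ n) y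
      = ∑ i ∈ range (n+1), (-1:ℝ)^i * (n.choose i) * ((n+i).descFactorial n) * y^i := by
    rw [h1, iteratedDeriv_polyEval]
    dsimp only
    rw [h2, Polynomial.eval_finset_sum]
    refine Finset.sum_congr rfl fun i _ => ?_
    have hni : n + i - n = i := by omega
    rw [hni]
    simp only [Polynomial.eval_smul, Polynomial.eval_pow, Polynomial.eval_X, smul_eq_mul,
      nsmul_eq_mul, Polynomial.eval_mul, Polynomial.eval_natCast]
    ring
  rw [hP y, h3, Finset.mul_sum]
  refine Finset.sum_congr rfl fun i _ => ?_
  have hdesc : ((n+i).descFactorial n : ℝ) = (n.factorial : ℝ) * ((n+i).choose n) := by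
    exact_mod_cast congrArg (Nat.cast : ℕ → ℝ) (Nat.descFactorial_eq_factorial_mul_choose (n+i) n)
  rw [hdesc]
  have hfac : (n.factorial : ℝ) ≠ 0 := by exact_mod_cast n.factorial_ne_zero
  field_simp

lemma poly_integral (k : ℕ) (e : ℕ → ℝ) (N : ℕ) :
    ∫ t in (0:ℝ)..1, t^k * (∑ i ∈ range N, e i * t^i)
      = ∑ i ∈ range N, e i * (1/((k:ℝ)+i+1)) := by
  have h1 : ∀ t : ℝ, t^k * (∑ i ∈ range N, e i * t^i)
      = ∑ i ∈ range N, e i * t^(k+i) := by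
    intro t
    rw [Finset.mul_sum]
    exact Finset.sum_congr rfl fun i _ => by rw [pow_add]; ring
  rw [intervalIntegral.integral_congr (g := fun t => ∑ i ∈ range N, e i * t^(k+i))
    (fun t _ => h1 t)]
  rw [intervalIntegral.integral_finset_sum (f := fun i t => e i * t^(k+i)) (fun i _ =>
    ((continuous_const.mul (continuous_pow (k+i)) : Continuous fun t : ℝ => e i * t^(k+i)).intervalIntegrable 0 1))]
  refine Finset.sum_congr rfl fun i _ => ?_
  rw [intervalIntegral.integral_const_mul, integral_pow]
  norm_num

lemma beta_integral (n k : ℕ) :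
    ∫ t in (0:ℝ)..1, t^k * (1-t)^n
      = ∑ i ∈ range (n+1), ((-1:ℝ)^i * (n.choose i)) * (1/((k:ℝ)+i+1)) := by
  rw [intervalIntegral.integral_congr
    (g := fun t => t^k * (∑ i ∈ range (n+1), ((-1:ℝ)^i * (n.choose i)) * t^i))
    (fun t _ => by rw [one_sub_pow_expand n t])]
  exact poly_integral k _ (n+1)

lemma prod_integral (g : Fin 5 → ℝ → ℝ) :
    ∫ x in (Set.univ.pi fun _ : Fin 5 => Set.Icc (0:ℝ) 1), (∏ i, g i (x i))
      = ∏ i, ∫ t in Set.Icc (0:ℝ) 1, g i t := by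
  have hT : MeasurableSet (Set.univ.pi fun _ : Fin 5 => Set.Icc (0:ℝ) 1) :=
    MeasurableSet.univ_pi fun _ => measurableSet_Icc
  rw [← integral_indicator hT]
  have hind : ∀ x : Fin 5 → ℝ,
      (Set.univ.pi fun _ : Fin 5 => Set.Icc (0:ℝ) 1).indicator (fun x => ∏ i, g i (x i)) x
      = ∏ i, (Set.Icc (0:ℝ) 1).indicator (g i) (x i) := by
    intro x
    by_cases hx : x ∈ Set.univ.pi fun _ : Fin 5 => Set.Icc (0:ℝ) 1
    · rw [Set.indicator_of_mem hx]
      exact Finset.prod_congr rfl fun i _ =>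
        (Set.indicator_of_mem (hx i (Set.mem_univ i)) (g i)).symm
    · rw [Set.indicator_of_notMem hx]
      obtain ⟨i, hi⟩ : ∃ i, x i ∉ Set.Icc (0:ℝ) 1 := by
        by_contra h
        push_neg at h
        exact hx (fun i _ => h i)
      rw [eq_comm]
      apply Finset.prod_eq_zero (Finset.mem_univ i)
      rw [Set.indicator_of_notMem hi]
  rw [show ((Set.univ.pi fun _ : Fin 5 => Set.Icc (0:ℝ) 1).indicator (fun x => ∏ i, g i (x i)))
      = fun x => ∏ i, (Set.Icc (0:ℝ) 1).indicator (g i) (x i) from funext hind]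
  rw [volume_pi]
  rw [MeasureTheory.integral_fintype_prod_eq_prod
    (f := fun i t => (Set.Icc (0:ℝ) 1).indicator (g i) t)]
  exact Finset.prod_congr rfl fun i _ => (integral_indicator measurableSet_Icc)

lemma Icc_to_interval (g : ℝ → ℝ) :
    ∫ t in Set.Icc (0:ℝ) 1, g t = ∫ t in (0:ℝ)..1, g t := by
  rw [intervalIntegral.integral_of_le zero_le_one, integral_Icc_eq_integral_Ioc]

lemma main_integral (n : ℕ) (P : ℝ → ℝ) (e : ℕ → ℝ)
    (hPf : ∀ y : ℝ, P y = ∑ i ∈ range (n+1), e i * y^i) :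
    ∫ x in (Set.univ.pi fun _ : Fin 5 => Set.Icc (0:ℝ) 1),
        ((1 - x 0) ^ n * (1 - x 1) ^ n * (1 - x 2) ^ n * (1 - x 3) ^ n * P (x 4)) /
          (1 - ∏ i, x i)
      = ∑' k : ℕ, (∫ t in (0:ℝ)..1, t^k * (1-t)^n)^4 * (∫ t in (0:ℝ)..1, t^k * P t) := by
  classical
  set T : Set (Fin 5 → ℝ) := Set.univ.pi fun _ : Fin 5 => Set.Icc (0:ℝ) 1 with hTdef
  have hT : MeasurableSet T := MeasurableSet.univ_pi fun _ => measurableSet_Icc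
  have hTc : IsCompact T := isCompact_univ_pi fun _ => isCompact_Icc
  have hPc : Continuous P := by
    rw [show P = fun y => ∑ i ∈ range (n+1), e i * y^i from funext hPf]
    exact continuous_finset_sum _ fun i _ => continuous_const.mul (continuous_pow i)
  set N : (Fin 5 → ℝ) → ℝ := fun x =>
    (1 - x 0) ^ n * (1 - x 1) ^ n * (1 - x 2) ^ n * (1 - x 3) ^ n * P (x 4) with hNdef
  have hNc : Continuous N := by
    refine (((((continuous_const.sub (continuous_apply 0)).pow n).mul
      ((continuous_const.sub (continuous_apply 1)).pow n)).mul
      ((continuous_const.sub (continuous_apply 2)).pow n)).mul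
      ((continuous_const.sub (continuous_apply 3)).pow n)).mul (hPc.comp (continuous_apply 4))
  set f : ℕ → (Fin 5 → ℝ) → ℝ := fun k x => N x * (∏ i, x i)^k with hfdef
  have hfc : ∀ k, Continuous (f k) :=
    fun k => hNc.mul ((continuous_finset_prod _ fun i _ => continuous_apply i).pow k)
  set Mp : ℝ := ∑ i ∈ range (n+1), |e i| with hMpdef
  have hMp : ∀ y : ℝ, y ∈ Set.Icc (0:ℝ) 1 → |P y| ≤ Mp := by
    intro y hy
    rw [hPf y]
    refine (Finset.abs_sum_le_sum_abs _ _).trans ?_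
    refine Finset.sum_le_sum fun i _ => ?_
    rw [abs_mul, abs_pow]
    have h1 : |y| ≤ 1 := abs_le.mpr ⟨by linarith [hy.1], hy.2⟩
    have h2 : |y|^i ≤ 1 := pow_le_one₀ (abs_nonneg y) h1
    nlinarith [abs_nonneg (e i)]
  have hfac : ∀ (x : Fin 5 → ℝ), x ∈ T → ∀ i : Fin 5, x i ∈ Set.Icc (0:ℝ) 1 :=
    fun x hx i => hx i (Set.mem_univ i)
  have hfour : ∀ (x : Fin 5 → ℝ), x ∈ T →
      0 ≤ (1 - x 0) ^ n * (1 - x 1) ^ n * (1 - x 2) ^ n * (1 - x 3) ^ n ∧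
      (1 - x 0) ^ n * (1 - x 1) ^ n * (1 - x 2) ^ n * (1 - x 3) ^ n ≤ 1 := by
    intro x hx
    have hb : ∀ i : Fin 5, 0 ≤ (1 - x i)^n ∧ (1 - x i)^n ≤ 1 := by
      intro i
      have h1 := (hfac x hx i).1
      have h2 := (hfac x hx i).2
      exact ⟨pow_nonneg (by linarith) n, pow_le_one₀ (by linarith) (by linarith)⟩
    obtain ⟨a0, b0⟩ := hb 0; obtain ⟨a1, b1⟩ := hb 1
    obtain ⟨a2, b2⟩ := hb 2; obtain ⟨a3, b3⟩ := hb 3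
    have h01n : 0 ≤ (1 - x 0)^n * (1 - x 1)^n := mul_nonneg a0 a1
    have h01 : (1 - x 0)^n * (1 - x 1)^n ≤ 1 := by nlinarith
    have h012n : 0 ≤ (1 - x 0)^n * (1 - x 1)^n * (1 - x 2)^n := mul_nonneg h01n a2
    have h012 : (1 - x 0)^n * (1 - x 1)^n * (1 - x 2)^n ≤ 1 := by nlinarith
    constructor
    · positivity
    · nlinarith
  have hNb : ∀ x ∈ T, |N x| ≤ Mp := by
    intro x hx
    rw [hNdef]
    dsimp only
    rw [abs_mul]
    obtain ⟨h0, h1⟩ := hfour x hx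
    have hP4 := hMp (x 4) (hfac x hx 4)
    have hMp0 : 0 ≤ Mp := le_trans (abs_nonneg _) hP4
    have habs : |(1 - x 0) ^ n * (1 - x 1) ^ n * (1 - x 2) ^ n * (1 - x 3) ^ n| ≤ 1 := by
      rw [abs_of_nonneg h0]; exact h1
    nlinarith [abs_nonneg ((1 - x 0) ^ n * (1 - x 1) ^ n * (1 - x 2) ^ n * (1 - x 3) ^ n),
      abs_nonneg (P (x 4))]
  -- product in [0,1), except at the corner
  have hprod01 : ∀ x ∈ T, 0 ≤ (∏ i, x i) ∧ (∏ i, x i) ≤ 1 := by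
    intro x hx
    exact ⟨Finset.prod_nonneg fun i _ => (hfac x hx i).1,
      Finset.prod_le_one (fun i _ => (hfac x hx i).1) (fun i _ => (hfac x hx i).2)⟩
  have hcorner : ∀ x ∈ T, x ≠ (fun _ => (1:ℝ)) → (∏ i, x i) < 1 := by
    intro x hx hne
    rcases lt_or_eq_of_le (hprod01 x hx).2 with h | h
    · exact h
    · exfalso
      apply hne
      funext j
      by_contra hj
      have hjlt : x j < 1 := lt_of_le_of_ne (hfac x hx j).2 hj
      have herase : ∏ i ∈ Finset.univ.erase j, x i ≤ 1 :=
        Finset.prod_le_one (fun i _ => (hfac x hx i).1) (fun i _ => (hfac x hx i).2)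
      have herase0 : 0 ≤ ∏ i ∈ Finset.univ.erase j, x i :=
        Finset.prod_nonneg (fun i _ => (hfac x hx i).1)
      have hmul := Finset.mul_prod_erase Finset.univ x (Finset.mem_univ j)
      have : (∏ i, x i) < 1 := by
        rw [← hmul]
        calc x j * ∏ i ∈ Finset.univ.erase j, x i ≤ x j * 1 :=
              mul_le_of_le_one_right (hfac x hx j).1 herase |>.trans (by linarith [(hfac x hx j).1])
          _ < 1 := by linarith
      linarith [h]
  have hgeo : ∀ x ∈ T, x ≠ (fun _ => (1:ℝ)) → N x / (1 - ∏ i, x i) = ∑' k, f k x := by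
    intro x hx hne
    have hlt := hcorner x hx hne
    have h0 := (hprod01 x hx).1
    rw [hfdef]
    dsimp only
    rw [tsum_mul_left, tsum_geometric_of_lt_one h0 hlt, div_eq_mul_inv]
  have hnull : volume ({(fun _ => (1:ℝ))} : Set (Fin 5 → ℝ)) = 0 := by
    have hs : ({(fun _ => (1:ℝ))} : Set (Fin 5 → ℝ)) = Set.pi Set.univ (fun _ => {(1:ℝ)}) := by
      ext y
      simp [funext_iff, Set.mem_pi]
    rw [hs, volume_pi_pi]
    simp
  have hae : (fun x => N x / (1 - ∏ i, x i)) =ᵐ[volume.restrict T] (fun x => ∑' k, f k x) := by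
    have h1 : ∀ᵐ (x : Fin 5 → ℝ) ∂(volume.restrict T), x ≠ (fun _ => (1:ℝ)) := by
      refine ae_restrict_of_ae ?_
      rw [ae_iff]
      convert hnull using 2
      ext y
      simp
    have h2 : ∀ᵐ (x : Fin 5 → ℝ) ∂(volume.restrict T), x ∈ T := ae_restrict_mem hT
    filter_upwards [h1, h2] with x hx1 hx2 using hgeo x hx2 hx1
  have hInt : ∀ k, Integrable (f k) (volume.restrict T) :=
    fun k => ((hfc k).continuousOn).integrableOn_compact hTc
  -- the value of ∫_T ∏ x_i^k
  have hpowint : ∀ k : ℕ, ∫ x in T, (∏ i, (x i)^k) = (1/((k:ℝ)+1))^5 := by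
    intro k
    rw [hTdef, prod_integral (fun _ t => t^k)]
    have h1 : ∫ t in Set.Icc (0:ℝ) 1, t^k = 1/((k:ℝ)+1) := by
      rw [Icc_to_interval, integral_pow]
      norm_num
    rw [Finset.prod_congr rfl fun i _ => h1, Finset.prod_const]
    norm_num
  have hbound : ∀ k : ℕ, (∫ x in T, ‖f k x‖) ≤ Mp * (1/((k:ℝ)+1))^5 := by
    intro k
    have hmaj : Integrable (fun x : Fin 5 → ℝ => Mp * ∏ i, (x i)^k) (volume.restrict T) :=
      ((continuous_const.mul (continuous_finset_prod _ fun i _ =>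
        (continuous_apply i).pow k)).continuousOn).integrableOn_compact hTc
    have hle : ∀ x ∈ T, ‖f k x‖ ≤ Mp * ∏ i, (x i)^k := by
      intro x hx
      rw [hfdef]
      dsimp only
      rw [norm_mul]
      have h0 := (hprod01 x hx).1
      have hppow : ‖(∏ i, x i)^k‖ = ∏ i, (x i)^k := by
        rw [Real.norm_eq_abs, abs_of_nonneg (pow_nonneg h0 k), Finset.prod_pow]
      rw [hppow]
      have hNx := hNb x hx
      have hpw : 0 ≤ ∏ i, (x i)^k := by
        rw [Finset.prod_pow]; exact pow_nonneg h0 k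
      exact mul_le_mul_of_nonneg_right (by rwa [Real.norm_eq_abs]) hpw
    calc (∫ x in T, ‖f k x‖) ≤ ∫ x in T, Mp * ∏ i, (x i)^k := by
          refine integral_mono_of_nonneg (Filter.Eventually.of_forall fun x => norm_nonneg _)
            hmaj ?_
          rw [EventuallyLE, ae_restrict_iff' hT]
          exact Filter.Eventually.of_forall hle
      _ = Mp * (1/((k:ℝ)+1))^5 := by rw [integral_const_mul, hpowint k]
  have hsummaj : Summable (fun k : ℕ => Mp * (1/((k:ℝ)+1))^5) := by
    have h := (Real.summable_one_div_nat_pow (p := 5)).mpr (by norm_num)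
    have h2 := (summable_nat_add_iff (f := fun n : ℕ => 1 / (n:ℝ)^5) 1).mpr h
    refine ((h2.congr fun k => ?_).mul_left Mp)
    push_cast
    rw [div_pow, one_pow]
  have hSum : Summable (fun k => ∫ x in T, ‖f k x‖) := by
    refine Summable.of_nonneg_of_le (fun k => integral_nonneg fun x => norm_nonneg _)
      (fun k => hbound k) hsummaj
  calc ∫ x in T, N x / (1 - ∏ i, x i)
      = ∫ x in T, ∑' k, f k x := integral_congr_ae hae
    _ = ∑' k, ∫ x in T, f k x :=
        (integral_tsum_of_summable_integral_norm hInt hSum).symm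
    _ = ∑' k : ℕ, (∫ t in (0:ℝ)..1, t^k * (1-t)^n)^4 * (∫ t in (0:ℝ)..1, t^k * P t) := by
        refine tsum_congr fun k => ?_
        have hG : ∀ x : Fin 5 → ℝ, f k x =
            ∏ i, (![fun t : ℝ => (1-t)^n * t^k, fun t => (1-t)^n * t^k,
              fun t => (1-t)^n * t^k, fun t => (1-t)^n * t^k,
              fun t => P t * t^k] : Fin 5 → ℝ → ℝ) i (x i) := by
          intro x
          rw [Fin.prod_univ_five, hfdef]
          dsimp only
          rw [Fin.prod_univ_five]
          simp only [Matrix.cons_val_zero, Matrix.cons_val_one, Matrix.head_cons,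
            Matrix.cons_val_two, Matrix.tail_cons, Matrix.cons_val_three, Matrix.cons_val_four]
          ring
        rw [show (fun x : Fin 5 → ℝ => f k x) = _ from funext hG]
        rw [hTdef, prod_integral]
        rw [Fin.prod_univ_five]
        simp only [Matrix.cons_val_zero, Matrix.cons_val_one, Matrix.head_cons,
          Matrix.cons_val_two, Matrix.tail_cons, Matrix.cons_val_three, Matrix.cons_val_four]
        have hbg : ∫ t in Set.Icc (0:ℝ) 1, (1-t)^n * t^k = ∫ t in (0:ℝ)..1, t^k * (1-t)^n := by
          rw [Icc_to_interval]
          exact intervalIntegral.integral_congr fun t _ => by ring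
        have hgg : ∫ t in Set.Icc (0:ℝ) 1, P t * t^k = ∫ t in (0:ℝ)..1, t^k * P t := by
          rw [Icc_to_interval]
          exact intervalIntegral.integral_congr fun t _ => by ring
        rw [hbg, hgg]
        ring

lemma IsIntR.prod {α : Type*} (s : Finset α) (f : α → ℝ) (h : ∀ a ∈ s, IsIntR (f a)) :
    IsIntR (∏ a ∈ s, f a) := by
  classical
  induction s using Finset.induction with
  | empty => simpa using IsIntR.one
  | insert _ _ hx ih =>
    rw [Finset.prod_insert hx]
    exact (h _ (Finset.mem_insert_self _ _)).mul (ih fun a ha => h a (Finset.mem_insert_of_mem ha))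

lemma IsIntR.neg_one_pow (i : ℕ) : IsIntR ((-1:ℝ)^i) := by
  induction i with
  | zero => simpa using IsIntR.one
  | succ i ih =>
    rw [pow_succ]
    obtain ⟨z, hz⟩ := ih
    exact ⟨-z, by rw [hz]; push_cast; ring⟩

lemma summable_prod5 (m : Fin 5 → ℕ) (hm : ∀ i, 1 ≤ m i) :
    Summable (fun k : ℕ => ∏ i, 1/((k:ℝ)+ m i)) := by
  have base2 : Summable (fun k : ℕ => 1/((k:ℝ)+1)^2) := by
    have h0 := summable_shift (j := 1) (le_refl 1) (le_refl 2)
    exact h0.congr fun k => by norm_num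
  refine Summable.of_nonneg_of_le
    (fun k => Finset.prod_nonneg fun i _ => by positivity) (fun k => ?_) base2
  have h5 : (∏ i, 1/((k:ℝ)+ m i)) ≤ (1/((k:ℝ)+1))^5 := by
    have := Finset.prod_le_prod (s := Finset.univ)
      (f := fun i : Fin 5 => 1/((k:ℝ)+ m i)) (g := fun _ : Fin 5 => 1/((k:ℝ)+1))
      (fun i _ => by positivity)
      (fun i _ => by
        refine one_div_le_one_div_of_le (by positivity) ?_
        have : (1:ℝ) ≤ (m i : ℝ) := by exact_mod_cast hm i
        linarith)
    simpa [Finset.prod_const, Finset.card_univ] using this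
  have h6 : ((1:ℝ)/((k:ℝ)+1))^5 ≤ (1/((k:ℝ)+1))^2 := by
    refine pow_le_pow_of_le_one (by positivity) ?_ (by norm_num)
    rw [div_le_one (by positivity)]
    linarith [Nat.cast_nonneg (α := ℝ) k]
  calc (∏ i, 1/((k:ℝ)+ m i)) ≤ (1/((k:ℝ)+1))^5 := h5
    _ ≤ (1/((k:ℝ)+1))^2 := h6
    _ = 1/((k:ℝ)+1)^2 := by rw [div_pow, one_pow]

def LinZ (z₂ z₃ z₄ z₅ x : ℝ) : Prop :=
  ∃ a b c d e : ℤ, x = a * z₂ + b * z₃ + c * z₄ + d * z₅ + e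

lemma LinZ.zero {z₂ z₃ z₄ z₅ : ℝ} : LinZ z₂ z₃ z₄ z₅ 0 :=
  ⟨0, 0, 0, 0, 0, by norm_num⟩

lemma LinZ.add {z₂ z₃ z₄ z₅ x y : ℝ} (hx : LinZ z₂ z₃ z₄ z₅ x) (hy : LinZ z₂ z₃ z₄ z₅ y) :
    LinZ z₂ z₃ z₄ z₅ (x + y) := by
  obtain ⟨a, b, c, d, e, rfl⟩ := hx
  obtain ⟨a', b', c', d', e', rfl⟩ := hy
  exact ⟨a+a', b+b', c+c', d+d', e+e', by push_cast; ring⟩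

lemma LinZ.intmul {z₂ z₃ z₄ z₅ w x : ℝ} (hw : IsIntR w) (hx : LinZ z₂ z₃ z₄ z₅ x) :
    LinZ z₂ z₃ z₄ z₅ (w * x) := by
  obtain ⟨zw, rfl⟩ := hw
  obtain ⟨a, b, c, d, e, rfl⟩ := hx
  exact ⟨zw*a, zw*b, zw*c, zw*d, zw*e, by push_cast; ring⟩

lemma LinZ.sum {α : Type*} {z₂ z₃ z₄ z₅ : ℝ} (s : Finset α) (f : α → ℝ)
    (h : ∀ a ∈ s, LinZ z₂ z₃ z₄ z₅ (f a)) : LinZ z₂ z₃ z₄ z₅ (∑ a ∈ s, f a) := by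
  classical
  induction s using Finset.induction with
  | empty => simpa using LinZ.zero
  | insert _ _ hx ih =>
    rw [Finset.sum_insert hx]
    exact (h _ (Finset.mem_insert_self _ _)).add (ih fun a ha => h a (Finset.mem_insert_of_mem ha))

theorem linear_form_in_zetas (n : ℕ) (hn : 0 < n)
    (P : ℝ → ℝ)
    (hP : ∀ y : ℝ, P y = (1 / (n.factorial : ℝ)) *
      iteratedDeriv n (fun t : ℝ => t ^ n * (1 - t) ^ n) y) :
    ∃ a b c d e : ℤ,
      ((((Finset.Icc 1 n).lcm id : ℕ) : ℝ)) ^ 5 *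
        ∫ x in (Set.univ.pi fun _ : Fin 5 => Set.Icc (0:ℝ) 1),
          ((1 - x 0) ^ n * (1 - x 1) ^ n * (1 - x 2) ^ n * (1 - x 3) ^ n * P (x 4)) /
            (1 - ∏ i, x i) =
      a * (∑' k : ℕ, 1 / ((k : ℝ) + 1) ^ 2) + b * (∑' k : ℕ, 1 / ((k : ℝ) + 1) ^ 3) +
        c * (∑' k : ℕ, 1 / ((k : ℝ) + 1) ^ 4) + d * (∑' k : ℕ, 1 / ((k : ℝ) + 1) ^ 5) + e := by
  classical
  set L : ℕ := (Finset.Icc 1 n).lcm id with hLdef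
  have hL : ∀ d : ℕ, 1 ≤ d → d ≤ n → d ∣ L := by
    intro d h1 h2
    have := Finset.dvd_lcm (f := (id : ℕ → ℕ)) (mem_Icc.mpr ⟨h1, h2⟩)
    simpa using this
  have hPf := legendre_formula n P hP
  have hI := main_integral n P _ hPf
  -- the coefficient functions
  set a : ℕ → ℝ := fun i => (-1:ℝ)^i * (n.choose i) with hadef
  set eC : ℕ → ℝ := fun i => (-1:ℝ)^i * (n.choose i) * ((n+i).choose n) with heCdef
  have ha_int : ∀ i, IsIntR (a i) := fun i => (IsIntR.neg_one_pow i).mul (IsIntR.natCast _)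
  have he_int : ∀ i, IsIntR (eC i) :=
    fun i => ((IsIntR.neg_one_pow i).mul (IsIntR.natCast _)).mul (IsIntR.natCast _)
  have hgamma : ∀ k : ℕ, (∫ t in (0:ℝ)..1, t^k * P t)
      = ∑ i ∈ range (n+1), eC i * (1/((k:ℝ)+i+1)) := by
    intro k
    rw [intervalIntegral.integral_congr (g := fun t => t^k * (∑ i ∈ range (n+1), eC i * t^i))
      (fun t _ => by rw [hPf t])]
    exact poly_integral k _ (n+1)
  -- per-k product expansion
  set w : Fin 5 → ℕ → ℝ := ![a, a, a, a, eC] with hwdef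
  have hw_int : ∀ t : Fin 5, ∀ i, IsIntR (w t i) := by
    intro t i
    fin_cases t <;> simp only [hwdef, Matrix.cons_val_zero, Matrix.cons_val_one, Matrix.head_cons,
      Matrix.cons_val_two, Matrix.tail_cons, Matrix.cons_val_three, Matrix.cons_val_four]
    exacts [ha_int i, ha_int i, ha_int i, ha_int i, he_int i]
  have hterm : ∀ k : ℕ, (∫ t in (0:ℝ)..1, t^k * (1-t)^n)^4 * (∫ t in (0:ℝ)..1, t^k * P t)
      = ∑ g ∈ Fintype.piFinset (fun _ : Fin 5 => range (n+1)),
          (∏ t, w t (g t)) * ∏ t, 1/((k:ℝ) + ((g t + 1 : ℕ) : ℝ)) := by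
    intro k
    have h1 : (∫ t in (0:ℝ)..1, t^k * (1-t)^n)^4 * (∫ t in (0:ℝ)..1, t^k * P t)
        = ∏ t : Fin 5, (∑ i ∈ range (n+1), w t i * (1/((k:ℝ)+i+1))) := by
      rw [Fin.prod_univ_five]
      simp only [hwdef, Matrix.cons_val_zero, Matrix.cons_val_one, Matrix.head_cons,
        Matrix.cons_val_two, Matrix.tail_cons, Matrix.cons_val_three, Matrix.cons_val_four]
      rw [beta_integral n k, hgamma k]
      ring
    rw [h1, Finset.prod_univ_sum]
    refine Finset.sum_congr rfl fun g _ => ?_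
    rw [Finset.prod_mul_distrib]
    congr 1
    refine Finset.prod_congr rfl fun t _ => ?_
    congr 1
    push_cast
    ring
  -- swap tsum and finite sum
  have hsummand : ∀ g ∈ Fintype.piFinset (fun _ : Fin 5 => range (n+1)),
      Summable (fun k : ℕ => (∏ t, w t (g t)) * ∏ t, 1/((k:ℝ) + ((g t + 1 : ℕ) : ℝ))) := by
    intro g _
    exact (summable_prod5 (fun t => g t + 1) (fun t => Nat.succ_le_succ (Nat.zero_le _))).mul_left _
  have hswap : (∑' k : ℕ, (∫ t in (0:ℝ)..1, t^k * (1-t)^n)^4 * (∫ t in (0:ℝ)..1, t^k * P t))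
      = ∑ g ∈ Fintype.piFinset (fun _ : Fin 5 => range (n+1)),
          (∏ t, w t (g t)) * ∑' k : ℕ, ∏ t, 1/((k:ℝ) + ((g t + 1 : ℕ) : ℝ)) := by
    rw [tsum_congr hterm, Summable.tsum_finsetSum hsummand]
    refine Finset.sum_congr rfl fun g hg => ?_
    rw [tsum_mul_left]
  -- apply the arithmetic result to each tuple
  have hLinZ : LinZ (∑' k : ℕ, 1 / ((k : ℝ) + 1) ^ 2) (∑' k : ℕ, 1 / ((k : ℝ) + 1) ^ 3)
      (∑' k : ℕ, 1 / ((k : ℝ) + 1) ^ 4) (∑' k : ℕ, 1 / ((k : ℝ) + 1) ^ 5)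
      ((L:ℝ)^5 * ∫ x in (Set.univ.pi fun _ : Fin 5 => Set.Icc (0:ℝ) 1),
        ((1 - x 0) ^ n * (1 - x 1) ^ n * (1 - x 2) ^ n * (1 - x 3) ^ n * P (x 4)) /
          (1 - ∏ i, x i)) := by
    rw [hI, hswap, Finset.mul_sum]
    refine LinZ.sum _ _ fun g hg => ?_
    have hmem : ∀ t : Fin 5, g t + 1 ∈ Icc 1 (n+1) := by
      intro t
      have := Fintype.mem_piFinset.mp hg t
      rw [mem_Icc]
      have := Finset.mem_range.mp this
      omega
    obtain ⟨A, hAint, hAeq⟩ := tsum_PF5 n L hL (fun t => g t + 1) hmem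
    have hcast : (fun k : ℕ => ∏ t, 1/((k:ℝ) + ((g t + 1 : ℕ) : ℝ)))
        = fun k : ℕ => ∏ t : Fin 5, 1/((k:ℝ) + ((g t + 1 : ℕ) : ℝ)) := rfl
    have heq2 : (L:ℝ)^5 * ((∏ t, w t (g t)) * ∑' k : ℕ, ∏ t, 1/((k:ℝ) + ((g t + 1 : ℕ) : ℝ)))
        = (∏ t, w t (g t)) * ((L:ℝ)^5 * ∑' k : ℕ, ∏ t, 1/((k:ℝ) + ((g t + 1 : ℕ) : ℝ))) := by
      ring
    rw [heq2, hAeq]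
    refine LinZ.intmul (IsIntR.prod _ _ fun t _ => hw_int t (g t)) ?_
    obtain ⟨a2, ha2⟩ := hAint 2
    obtain ⟨a3, ha3⟩ := hAint 3
    obtain ⟨a4, ha4⟩ := hAint 4
    obtain ⟨a5, ha5⟩ := hAint 5
    obtain ⟨a0, ha0⟩ := hAint 0
    exact ⟨a2, a3, a4, a5, a0, by rw [← ha2, ← ha3, ← ha4, ← ha5, ← ha0]⟩
  obtain ⟨A2, A3, A4, A5, A0, hfin⟩ := hLinZ
  exact ⟨A2, A3, A4, A5, A0, hfin⟩
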